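/- Let a > 0. Then lim_{m→1⁺} α(a,m) = 1, where α(a,m) is the unique value with inf_ξ μ₁(a,m,α(a,m);ξ) = 0. Quantitatively: if m = 1 + ε with ε ∈ (0,1) and α = α(a,m), then 0 ≥ 1 - α + m·ε·(Θ₀ - α), from which 1 - α ≤ m·ε·(α - Θ₀) ≤ 2ε. -/

import Mathlib

open MeasureTheory Set Filter Topology

noncomputable section

/-- `B¹(ℝ₊)`-type regularity on the half line (smooth core):
`u`, `u'` and `t·u` are square integrable on `(0,∞)`. -/
def MemB1p (u : ℝ → ℝ) : Prop :=
  Differentiable ℝ u ∧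
  IntegrableOn (fun t => (u t)^2) (Ioi 0) ∧
  IntegrableOn (fun t => (deriv u t)^2) (Ioi 0) ∧
  IntegrableOn (fun t => t^2 * (u t)^2) (Ioi 0)

/-- The Robin quadratic form `q[γ,ξ]` of `-d²/dt² + (t-ξ)²` on `ℝ₊`. -/
def qRobin (γ ξ : ℝ) (u : ℝ → ℝ) : ℝ :=
  (∫ t in Ioi (0:ℝ), ((deriv u t)^2 + (t - ξ)^2 * (u t)^2)) + γ * (u 0)^2

/-- squared `L²(ℝ₊)` norm. -/
def np (u : ℝ → ℝ) : ℝ := ∫ t in Ioi (0:ℝ), (u t)^2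

/-- Lowest Robin eigenvalue `λ₁(γ,ξ)`, defined variationally. -/
def lambda1 (γ ξ : ℝ) : ℝ :=
  sInf {r : ℝ | ∃ u : ℝ → ℝ, MemB1p u ∧ np u ≠ 0 ∧ r = qRobin γ ξ u / np u}

/-- Lowest Neumann eigenvalue `λ₁^N(ξ)` (Robin with `γ = 0`). -/
def lambda1N (ξ : ℝ) : ℝ := lambda1 0 ξ

/-- Lowest Dirichlet eigenvalue `λ₁^D(ξ)`, defined variationally. -/
def lambda1D (ξ : ℝ) : ℝ :=
  sInf {r : ℝ | ∃ u : ℝ → ℝ, MemB1p u ∧ u 0 = 0 ∧ np u ≠ 0 ∧ r = qRobin 0 ξ u / np u}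

/-- The de Gennes constant `Θ₀ = inf_ξ λ₁^N(ξ)`. -/
def Theta0 : ℝ := sInf (Set.range lambda1N)

/-- `B¹(ℝ)`-type regularity on the whole line (smooth core). -/
def MemB1 (u : ℝ → ℝ) : Prop :=
  Differentiable ℝ u ∧
  Integrable (fun t => (u t)^2) ∧
  Integrable (fun t => (deriv u t)^2) ∧
  Integrable (fun t => t^2 * (u t)^2)

/-- The interface quadratic form `Q[a,m,α;ξ]` on `B¹(ℝ)`. -/
def QI (a m α ξ : ℝ) (u : ℝ → ℝ) : ℝ :=
  (∫ t in Ioi (0:ℝ), ((deriv u t)^2 + (t - ξ)^2 * (u t)^2 - α * (u t)^2)) +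
  ∫ t in Iio (0:ℝ), ((1/m) * ((deriv u t)^2 + (t - ξ)^2 * (u t)^2) + a * α * (u t)^2)

/-- squared `L²(ℝ)` norm. -/
def nR (u : ℝ → ℝ) : ℝ := ∫ t, (u t)^2

/-- Ground state energy `μ₁(a,m,α;ξ)` of the interface operator, defined variationally. -/
def mu1 (a m α ξ : ℝ) : ℝ :=
  sInf {r : ℝ | ∃ u : ℝ → ℝ, MemB1 u ∧ nR u ≠ 0 ∧ r = QI a m α ξ u / nR u}

/-- The critical value `α(a,m)` (the unique `α > 0` with `inf_ξ μ₁(a,m,α;ξ) = 0`). -/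
def alphaF (a m : ℝ) : ℝ :=
  sInf {α : ℝ | 0 < α ∧ sInf (Set.range (mu1 a m α)) = 0}

/-- limit of an integrable function at infinity (if exists) is zero -/
lemma tendsto_zero_of_integrable {w : ℝ → ℝ} (hw : Integrable w) {L : ℝ}
    (h : Tendsto w atTop (𝓝 L)) : L = 0 := by
  by_contra hL
  have habs : Tendsto (fun t => |w t|) atTop (𝓝 |L|) := h.abs
  have hev : ∀ᶠ t in atTop, |L| / 2 < |w t| :=
    habs.eventually (eventually_gt_nhds (half_lt_self (abs_pos.2 hL)))
  obtain ⟨T, hT⟩ := hev.exists_forall_of_atTop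
  have hconst : Integrable (fun _ : ℝ => |L| / 2) (volume.restrict (Ioi T)) := by
    refine Integrable.mono' (hw.abs.restrict (s := Ioi T)) aestronglyMeasurable_const ?_
    refine (ae_restrict_iff' measurableSet_Ioi).2 (ae_of_all _ fun t ht => ?_)
    rw [Real.norm_eq_abs, abs_of_nonneg (by positivity)]
    exact (hT t ht.le).le
  rw [integrable_const_iff] at hconst
  rcases hconst with h1 | h2
  · exact hL (by simpa using abs_eq_zero.1 (by linarith [abs_nonneg L]))
  · have := h2.measure_univ_lt_top
    simp [Measure.restrict_apply, Real.volume_Ioi] at this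

/-- FTC: integral over ℝ of the derivative of an integrable function with integrable
derivative is zero. -/
lemma integral_deriv_eq_zero {w : ℝ → ℝ} (hd : Differentiable ℝ w) (hw : Integrable w)
    (hw' : Integrable (deriv w)) : ∫ t, deriv w t = 0 := by
  have hFTC : ∀ x : ℝ, ∫ t in (0:ℝ)..x, deriv w t = w x - w 0 := fun x =>
    intervalIntegral.integral_deriv_eq_sub (fun t _ => hd t)
      hw'.intervalIntegrable
  -- at +∞
  have h1 : Tendsto (fun x => ∫ t in (0:ℝ)..x, deriv w t) atTop
      (𝓝 (∫ t in Ioi (0:ℝ), deriv w t)) :=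
    intervalIntegral_tendsto_integral_Ioi 0 hw'.integrableOn tendsto_id
  have h1' : Tendsto w atTop (𝓝 ((∫ t in Ioi (0:ℝ), deriv w t) + w 0)) := by
    have := h1.add_const (w 0)
    refine this.congr fun x => ?_
    rw [hFTC x]; ring
  have hIoi : ∫ t in Ioi (0:ℝ), deriv w t = -w 0 := by
    have := tendsto_zero_of_integrable hw h1'
    linarith
  -- at -∞
  have h2 : Tendsto (fun x => ∫ t in x..(0:ℝ), deriv w t) atBot
      (𝓝 (∫ t in Iic (0:ℝ), deriv w t)) :=
    intervalIntegral_tendsto_integral_Iic 0 hw'.integrableOn tendsto_id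
  have h2' : Tendsto w atBot (𝓝 (w 0 - ∫ t in Iic (0:ℝ), deriv w t)) := by
    have h2b : Tendsto (fun x => w 0 - ∫ t in x..(0:ℝ), deriv w t) atBot
        (𝓝 (w 0 - ∫ t in Iic (0:ℝ), deriv w t)) := (tendsto_const_nhds.sub h2)
    refine h2b.congr fun x => ?_
    have : ∫ t in x..(0:ℝ), deriv w t = w 0 - w x := by
      rw [intervalIntegral.integral_symm, hFTC x]; ring
    rw [this]; ring
  have hcomp : Tendsto (fun t : ℝ => w (-t)) atTop (𝓝 (w 0 - ∫ t in Iic (0:ℝ), deriv w t)) :=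
    h2'.comp tendsto_neg_atTop_atBot
  have hIic : ∫ t in Iic (0:ℝ), deriv w t = w 0 := by
    have := tendsto_zero_of_integrable (by simpa using hw.comp_neg) hcomp
    linarith
  rw [← intervalIntegral.integral_Iic_add_Ioi hw'.integrableOn hw'.integrableOn, hIic, hIoi]
  ring

section Integrability

lemma abs_le_sq_add_one (t : ℝ) : |t| ≤ t^2 + 1 := by
  rcases le_total (|t|) 1 with h | h
  · nlinarith [sq_nonneg t]
  · nlinarith [sq_abs t, abs_nonneg t]

lemma abs_mul_le_half_sq (x y : ℝ) : |x * y| ≤ (x^2 + y^2)/2 := by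
  rcases abs_cases (x * y) with ⟨h, _⟩ | ⟨h, _⟩ <;> nlinarith [sq_nonneg (x - y), sq_nonneg (x + y)]

variable {u : ℝ → ℝ} (ξ : ℝ)

lemma MemB1.cont (hu : MemB1 u) : Continuous u := hu.1.continuous

lemma aesm_deriv (u : ℝ → ℝ) : AEStronglyMeasurable (deriv u) volume :=
  (measurable_deriv u).aestronglyMeasurable

/-- `t * u t ^ 2` is integrable. -/
lemma MemB1.int_tu2 (hu : MemB1 u) : Integrable (fun t => t * (u t)^2) := by
  refine Integrable.mono' (hu.2.2.2.add hu.2.1) ?_ (ae_of_all _ fun t => ?_)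
  · exact ((continuous_id.mul ((hu.cont.pow 2))).aestronglyMeasurable)
  · simp only [Pi.add_apply, Real.norm_eq_abs, abs_mul, abs_sq]
    nlinarith [abs_le_sq_add_one t, sq_nonneg (u t)]

/-- `(t-ξ)^2 * u t ^ 2` is integrable. -/
lemma MemB1.int_shift2 (hu : MemB1 u) : Integrable (fun t => (t - ξ)^2 * (u t)^2) := by
  have h : (fun t => (t - ξ)^2 * (u t)^2)
      = fun t => t^2 * (u t)^2 + ((-2*ξ) * (t * (u t)^2) + ξ^2 * (u t)^2) := by
    funext t; ring
  rw [h]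
  exact hu.2.2.2.add (((hu.int_tu2).const_mul _).add (hu.2.1.const_mul _))

/-- `(t-ξ) * u t ^ 2` is integrable. -/
lemma MemB1.int_shift1 (hu : MemB1 u) : Integrable (fun t => (t - ξ) * (u t)^2) := by
  refine Integrable.mono' ((hu.int_shift2 ξ).add hu.2.1) ?_ (ae_of_all _ fun t => ?_)
  · exact ((continuous_id.sub continuous_const).mul (hu.cont.pow 2)).aestronglyMeasurable
  · simp only [Pi.add_apply, Real.norm_eq_abs, abs_mul, abs_sq]
    nlinarith [abs_le_sq_add_one (t - ξ), sq_nonneg (u t)]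

/-- `(t-ξ) * u t * deriv u t` is integrable. -/
lemma MemB1.int_shift_ud (hu : MemB1 u) :
    Integrable (fun t => (t - ξ) * u t * deriv u t) := by
  refine Integrable.mono' (((hu.int_shift2 ξ).add hu.2.2.1).const_mul (1/2)) ?_
    (ae_of_all _ fun t => ?_)
  · exact (((continuous_id.sub continuous_const).mul hu.cont).aestronglyMeasurable.mul
      (aesm_deriv u))
  · simp only [Pi.add_apply, Real.norm_eq_abs, smul_eq_mul]
    calc |(t - ξ) * u t * deriv u t| = |((t - ξ) * u t) * deriv u t| := by ring_nf
      _ ≤ (((t - ξ) * u t)^2 + (deriv u t)^2)/2 := abs_mul_le_half_sq _ _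
      _ ≤ 1/2 * ((t - ξ)^2 * (u t)^2 + (deriv u t)^2) := by nlinarith []

end Integrability

section Oscillator

/-- Whole-line harmonic oscillator bound: `∫ u² ≤ ∫ (u'² + (t-ξ)²u²)`. -/
lemma osc_line {u : ℝ → ℝ} (hu : MemB1 u) (ξ : ℝ) :
    ∫ t, (u t)^2 ≤ ∫ t, ((deriv u t)^2 + (t - ξ)^2 * (u t)^2) := by
  set w : ℝ → ℝ := fun t => (t - ξ) * (u t)^2 with hw_def
  have hwD : ∀ t, HasDerivAt w ((u t)^2 + (t - ξ) * (2 * u t * deriv u t)) t := by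
    intro t
    have h1 : HasDerivAt (fun s : ℝ => s - ξ) 1 t := (hasDerivAt_id t).sub_const ξ
    have h2 : HasDerivAt (fun s => (u s)^2) (2 * u t * deriv u t) t := by
      have := ((hu.1 t).hasDerivAt).pow 2
      exact this.congr_deriv (by norm_num)
    have := h1.mul h2
    exact this.congr_deriv (by ring)
  have hwDiff : Differentiable ℝ w := fun t => (hwD t).differentiableAt
  have hderiv_w : deriv w = fun t => (u t)^2 + (t - ξ) * (2 * u t * deriv u t) := by
    funext t; exact (hwD t).deriv
  have hw_int : Integrable w := by
    have := hu.int_shift1 ξ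
    simpa [hw_def] using this
  have hw'_int : Integrable (deriv w) := by
    rw [hderiv_w]
    have h2 : Integrable (fun t => 2 * ((t - ξ) * u t * deriv u t)) :=
      (hu.int_shift_ud ξ).const_mul 2
    exact (hu.2.1.add h2).congr (ae_of_all _ fun t => by
      simp only [Pi.add_apply]; ring)
  have hzero : ∫ t, deriv w t = 0 := integral_deriv_eq_zero hwDiff hw_int hw'_int
  have hkey : ∫ t, ((u t)^2 + 2 * ((t - ξ) * u t * deriv u t)) = 0 := by
    rw [← hzero, hderiv_w]
    congr 1; funext t; ring
  have hsplit : (∫ t, (u t)^2) + ∫ t, 2 * ((t - ξ) * u t * deriv u t) = 0 := by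
    rw [← integral_add hu.2.1 ((hu.int_shift_ud ξ).const_mul 2)]
    exact hkey
  have hcross : ∫ t, 2 * ((t - ξ) * u t * deriv u t) = -∫ t, (u t)^2 := by linarith
  have hsq : 0 ≤ ∫ t, (deriv u t + (t - ξ) * u t)^2 := integral_nonneg fun t => sq_nonneg _
  have hA : Integrable (fun t => (deriv u t)^2 + (t - ξ)^2 * (u t)^2) :=
    (hu.2.2.1.add (hu.int_shift2 ξ)).congr (ae_of_all _ fun t => by
      simp only [Pi.add_apply])
  have hexp : ∫ t, (deriv u t + (t - ξ) * u t)^2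
      = (∫ t, ((deriv u t)^2 + (t - ξ)^2 * (u t)^2)) + ∫ t, 2 * ((t - ξ) * u t * deriv u t) := by
    rw [← integral_add hA ((hu.int_shift_ud ξ).const_mul 2)]
    congr 1; funext t; ring
  rw [hexp, hcross] at hsq
  linarith

end Oscillator

section HalfLine

lemma qRobinN_nonneg (ξ : ℝ) (u : ℝ → ℝ) : 0 ≤ qRobin 0 ξ u := by
  unfold qRobin
  have : 0 ≤ ∫ t in Ioi (0:ℝ), ((deriv u t)^2 + (t - ξ)^2 * (u t)^2) :=
    setIntegral_nonneg measurableSet_Ioi fun t _ => by positivity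
  simpa using this

lemma np_nonneg (u : ℝ → ℝ) : 0 ≤ np u :=
  setIntegral_nonneg measurableSet_Ioi fun t _ => sq_nonneg _

lemma lambda1N_nonneg (ξ : ℝ) : 0 ≤ lambda1N ξ := by
  apply Real.sInf_nonneg
  rintro r ⟨u, hu, hnp, rfl⟩
  exact div_nonneg (qRobinN_nonneg ξ u) (np_nonneg u)

lemma theta0_nonneg : 0 ≤ Theta0 :=
  Real.sInf_nonneg (by rintro r ⟨ξ, rfl⟩; exact lambda1N_nonneg ξ)

lemma theta0_le_lambda1N (ξ : ℝ) : Theta0 ≤ lambda1N ξ :=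
  csInf_le ⟨0, by rintro r ⟨ξ', rfl⟩; exact lambda1N_nonneg ξ'⟩ ⟨ξ, rfl⟩

/-- The half-line Neumann bound on `(0,∞)` for a `MemB1p` function. -/
lemma theta0_bound_Ioi {v : ℝ → ℝ} (hv : MemB1p v) (ξ : ℝ) :
    Theta0 * ∫ t in Ioi (0:ℝ), (v t)^2
      ≤ ∫ t in Ioi (0:ℝ), ((deriv v t)^2 + (t - ξ)^2 * (v t)^2) := by
  by_cases hnp : np v = 0
  · rw [show (∫ t in Ioi (0:ℝ), (v t)^2) = np v from rfl, hnp, mul_zero]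
    exact setIntegral_nonneg measurableSet_Ioi fun t _ => by positivity
  · have hnp_pos : 0 < np v := lt_of_le_of_ne (np_nonneg v) (Ne.symm hnp)
    have hmem : qRobin 0 ξ v / np v ∈
        {r : ℝ | ∃ u : ℝ → ℝ, MemB1p u ∧ np u ≠ 0 ∧ r = qRobin 0 ξ u / np u} :=
      ⟨v, hv, hnp, rfl⟩
    have hbdd : BddBelow {r : ℝ | ∃ u : ℝ → ℝ, MemB1p u ∧ np u ≠ 0 ∧ r = qRobin 0 ξ u / np u} :=
      ⟨0, by rintro r ⟨u, hu, hnpu, rfl⟩; exact div_nonneg (qRobinN_nonneg ξ u) (np_nonneg u)⟩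
    have h1 : Theta0 ≤ qRobin 0 ξ v / np v :=
      le_trans (theta0_le_lambda1N ξ) (csInf_le hbdd hmem)
    have h2 : Theta0 * np v ≤ qRobin 0 ξ v := by
      rw [div_eq_mul_inv] at h1
      calc Theta0 * np v ≤ (qRobin 0 ξ v * (np v)⁻¹) * np v := by
            exact mul_le_mul_of_nonneg_right h1 hnp_pos.le
        _ = qRobin 0 ξ v := by field_simp
    unfold qRobin at h2
    simpa [np] using h2

/-- Reflection: integrability transfer from `Iio 0` to `Ioi 0`. -/
lemma integrableOn_comp_neg_Ioi {f : ℝ → ℝ} (h : IntegrableOn f (Iio 0)) :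
    IntegrableOn (fun t => f (-t)) (Ioi 0) := by
  have A : MeasurableEmbedding fun x : ℝ => -x :=
    (Homeomorph.neg ℝ).isClosedEmbedding.measurableEmbedding
  have : IntegrableOn (fun t => f (-t)) (Ioi 0) (Measure.map (fun x : ℝ => -x) volume) := by
    rw [A.integrableOn_map_iff]
    have : ((fun t : ℝ => f (-t)) ∘ fun x : ℝ => -x) = f := by funext x; simp
    rw [this]
    have : (fun x : ℝ => -x) ⁻¹' Ioi 0 = Iio 0 := by
      ext x; simp
    rwa [this]
  rwa [Measure.map_neg_eq_self (volume : Measure ℝ)] at this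

/-- The half-line Neumann bound on `(-∞,0)`. -/
lemma theta0_bound_Iio {u : ℝ → ℝ} (hu : MemB1 u) (ξ : ℝ) :
    Theta0 * ∫ t in Iio (0:ℝ), (u t)^2
      ≤ ∫ t in Iio (0:ℝ), ((deriv u t)^2 + (t - ξ)^2 * (u t)^2) := by
  have hvD : ∀ t, HasDerivAt (fun t => u (-t)) (-deriv u (-t)) t := by
    intro t
    have h1 : HasDerivAt (fun s : ℝ => -s) (-1) t := (hasDerivAt_id t).neg
    have h2 := (hu.1 (-t)).hasDerivAt
    have := h2.comp t h1
    exact this.congr_deriv (by ring)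
  have hvDiff : Differentiable ℝ (fun t => u (-t)) := fun t => (hvD t).differentiableAt
  have hderiv_v : ∀ t, deriv (fun t => u (-t)) t = -deriv u (-t) := fun t => (hvD t).deriv
  have hv1 : MemB1p (fun t => u (-t)) := by
    unfold MemB1p
    refine ⟨hvDiff, ?_, ?_, ?_⟩
    · exact integrableOn_comp_neg_Ioi (f := fun s => (u s)^2) hu.2.1.integrableOn
    · have h3 : IntegrableOn (fun t => (deriv u (-t))^2) (Ioi 0) :=
        integrableOn_comp_neg_Ioi (f := fun s => (deriv u s)^2) hu.2.2.1.integrableOn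
      exact h3.congr_fun (fun t _ => by rw [hderiv_v t]; ring) measurableSet_Ioi
    · have h3 : IntegrableOn (fun t => (-t)^2 * (u (-t))^2) (Ioi 0) :=
        integrableOn_comp_neg_Ioi (f := fun s => s^2 * (u s)^2) hu.2.2.2.integrableOn
      exact h3.congr_fun (fun t _ => by ring_nf) measurableSet_Ioi
  have hkey := theta0_bound_Ioi hv1 (-ξ)
  have hL : ∫ t in Ioi (0:ℝ), (u (-t))^2 = ∫ t in Iio (0:ℝ), (u t)^2 := by
    have h1 : ∫ t in Ioi (0:ℝ), (fun s => (u s)^2) (-t) = ∫ t in Iic (-(0:ℝ)), (u t)^2 :=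
      integral_comp_neg_Ioi 0 (fun s => (u s)^2)
    simp only [neg_zero] at h1
    rw [h1, ← setIntegral_congr_set Iio_ae_eq_Iic]
  have hR : ∫ t in Ioi (0:ℝ), ((deriv (fun t => u (-t)) t)^2 + (t - (-ξ))^2 * (u (-t))^2)
      = ∫ t in Iio (0:ℝ), ((deriv u t)^2 + (t - ξ)^2 * (u t)^2) := by
    have h0 : (fun t => (deriv (fun t => u (-t)) t)^2 + (t - (-ξ))^2 * (u (-t))^2)
        = fun t => (fun s => (deriv u s)^2 + (s - ξ)^2 * (u s)^2) (-t) := by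
      funext t; rw [hderiv_v t]; ring
    rw [h0, integral_comp_neg_Ioi 0 (fun s => (deriv u s)^2 + (s - ξ)^2 * (u s)^2)]
    simp only [neg_zero]
    rw [← setIntegral_congr_set Iio_ae_eq_Iic]
  rw [hL, hR] at hkey
  exact hkey

end HalfLine

section Split

variable {u : ℝ → ℝ}

/-- the energy density is integrable -/
lemma MemB1.intA (hu : MemB1 u) (ξ : ℝ) :
    Integrable (fun t => (deriv u t)^2 + (t - ξ)^2 * (u t)^2) :=
  (hu.2.2.1.add (hu.int_shift2 ξ)).congr (ae_of_all _ fun t => by simp only [Pi.add_apply])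

lemma QI_split (hu : MemB1 u) (a m α ξ : ℝ) :
    QI a m α ξ u =
      (∫ t in Ioi (0:ℝ), ((deriv u t)^2 + (t - ξ)^2 * (u t)^2))
      - α * (∫ t in Ioi (0:ℝ), (u t)^2)
      + ((1/m) * (∫ t in Iio (0:ℝ), ((deriv u t)^2 + (t - ξ)^2 * (u t)^2))
      + a * α * (∫ t in Iio (0:ℝ), (u t)^2)) := by
  unfold QI
  have h1 : ∫ t in Ioi (0:ℝ), ((deriv u t)^2 + (t - ξ)^2 * (u t)^2 - α * (u t)^2)
      = (∫ t in Ioi (0:ℝ), ((deriv u t)^2 + (t - ξ)^2 * (u t)^2))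
        - α * ∫ t in Ioi (0:ℝ), (u t)^2 := by
    rw [← MeasureTheory.integral_const_mul, ← integral_sub ((hu.intA ξ).integrableOn)
      ((hu.2.1.const_mul α).integrableOn)]
  have h2 : ∫ t in Iio (0:ℝ), ((1/m) * ((deriv u t)^2 + (t - ξ)^2 * (u t)^2) + a * α * (u t)^2)
      = (1/m) * (∫ t in Iio (0:ℝ), ((deriv u t)^2 + (t - ξ)^2 * (u t)^2))
        + a * α * ∫ t in Iio (0:ℝ), (u t)^2 := by
    rw [← MeasureTheory.integral_const_mul, ← MeasureTheory.integral_const_mul, ← integral_add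
      (((hu.intA ξ).const_mul _).integrableOn) ((hu.2.1.const_mul _).integrableOn)]
  rw [h1, h2]

lemma nR_split (hu : MemB1 u) :
    nR u = (∫ t in Iio (0:ℝ), (u t)^2) + ∫ t in Ioi (0:ℝ), (u t)^2 := by
  unfold nR
  rw [← intervalIntegral.integral_Iic_add_Ioi hu.2.1.integrableOn hu.2.1.integrableOn,
    setIntegral_congr_set (Iio_ae_eq_Iic (a := (0:ℝ)))]

lemma A_split (hu : MemB1 u) (ξ : ℝ) :
    ∫ t, ((deriv u t)^2 + (t - ξ)^2 * (u t)^2)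
      = (∫ t in Iio (0:ℝ), ((deriv u t)^2 + (t - ξ)^2 * (u t)^2))
        + ∫ t in Ioi (0:ℝ), ((deriv u t)^2 + (t - ξ)^2 * (u t)^2) := by
  rw [← intervalIntegral.integral_Iic_add_Ioi (hu.intA ξ).integrableOn
      (hu.intA ξ).integrableOn,
    setIntegral_congr_set (Iio_ae_eq_Iic (a := (0:ℝ)))]

lemma Np_nonneg (u : ℝ → ℝ) : 0 ≤ ∫ t in Ioi (0:ℝ), (u t)^2 :=
  setIntegral_nonneg measurableSet_Ioi fun t _ => sq_nonneg _

lemma Nm_nonneg (u : ℝ → ℝ) : 0 ≤ ∫ t in Iio (0:ℝ), (u t)^2 :=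
  setIntegral_nonneg measurableSet_Iio fun t _ => sq_nonneg _

lemma Pp_nonneg (u : ℝ → ℝ) (ξ : ℝ) :
    0 ≤ ∫ t in Ioi (0:ℝ), ((deriv u t)^2 + (t - ξ)^2 * (u t)^2) :=
  setIntegral_nonneg measurableSet_Ioi fun t _ => by positivity

lemma Pm_nonneg (u : ℝ → ℝ) (ξ : ℝ) :
    0 ≤ ∫ t in Iio (0:ℝ), ((deriv u t)^2 + (t - ξ)^2 * (u t)^2) :=
  setIntegral_nonneg measurableSet_Iio fun t _ => by positivity

lemma nR_nonneg (u : ℝ → ℝ) : 0 ≤ nR u := integral_nonneg fun t => sq_nonneg _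

end Split

section Gaussian

open Real

/-- shifted Gaussian -/
def gs (ξ t : ℝ) : ℝ := Real.exp (-((t - ξ)^2) / 2)

lemma gs_sq (ξ t : ℝ) : (gs ξ t)^2 = Real.exp (-((t - ξ)^2)) := by
  unfold gs
  rw [sq, ← Real.exp_add]
  ring_nf

lemma gs_hasDeriv (ξ t : ℝ) : HasDerivAt (gs ξ) (-(t - ξ) * gs ξ t) t := by
  have h1 : HasDerivAt (fun s : ℝ => -((s - ξ)^2) / 2) (-(t - ξ)) t := by
    have := (((hasDerivAt_id t).sub_const ξ).pow 2).neg.div_const 2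
    exact this.congr_deriv (by simp only [id_eq]; norm_num; ring)
  have := h1.exp
  exact this.congr_deriv (by unfold gs; ring)

lemma gs_diff (ξ : ℝ) : Differentiable ℝ (gs ξ) := fun t => (gs_hasDeriv ξ t).differentiableAt

lemma gs_deriv (ξ : ℝ) : deriv (gs ξ) = fun t => -(t - ξ) * gs ξ t :=
  funext fun t => (gs_hasDeriv ξ t).deriv

lemma int_exp_shift_sq (ξ : ℝ) : Integrable (fun t : ℝ => Real.exp (-((t - ξ)^2))) := by
  have h0 : Integrable (fun x : ℝ => Real.exp (-1 * x^2)) := integrable_exp_neg_mul_sq one_pos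
  have := h0.comp_sub_right ξ
  exact this.congr (ae_of_all _ fun t => by norm_num)

lemma int_sq_exp_sq : Integrable (fun x : ℝ => x^2 * Real.exp (-(x^2))) := by
  have h0 : Integrable (fun x : ℝ => Real.exp (-(1/2) * x^2)) :=
    integrable_exp_neg_mul_sq (by norm_num)
  refine Integrable.mono' (h0.const_mul 2) ?_ (ae_of_all _ fun x => ?_)
  · exact ((continuous_pow 2).mul (continuous_exp.comp (continuous_pow 2).neg)).aestronglyMeasurable
  · rw [Real.norm_eq_abs, abs_of_nonneg (by positivity)]
    have h1 : x^2 ≤ 2 * Real.exp (x^2/2) := by nlinarith [Real.add_one_le_exp (x^2/2)]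
    have h2 : x^2 * Real.exp (-(x^2)) ≤ 2 * Real.exp (x^2/2) * Real.exp (-(x^2)) := by
      have := Real.exp_pos (-(x^2))
      nlinarith
    calc x^2 * Real.exp (-(x^2)) ≤ 2 * Real.exp (x^2/2) * Real.exp (-(x^2)) := h2
      _ = 2 * Real.exp (-(1/2) * x^2) := by rw [mul_assoc, ← Real.exp_add]; ring_nf

lemma int_shift_sq_exp (ξ : ℝ) :
    Integrable (fun t : ℝ => (t - ξ)^2 * Real.exp (-((t - ξ)^2))) := by
  have := int_sq_exp_sq.comp_sub_right ξ
  exact this.congr (ae_of_all _ fun t => rfl)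

lemma memB1_gs (ξ : ℝ) : MemB1 (gs ξ) := by
  refine ⟨gs_diff ξ, ?_, ?_, ?_⟩
  · exact (int_exp_shift_sq ξ).congr (ae_of_all _ fun t => (gs_sq ξ t).symm)
  · refine ((int_shift_sq_exp ξ)).congr (ae_of_all _ fun t => ?_)
    rw [gs_deriv ξ]
    simp only []
    rw [mul_pow, gs_sq]
    ring_nf
  · refine Integrable.mono' (((int_shift_sq_exp ξ).const_mul 2).add
      ((int_exp_shift_sq ξ).const_mul (2*ξ^2))) ?_ (ae_of_all _ fun t => ?_)
    · exact ((continuous_pow 2).mul ((gs_diff ξ).continuous.pow 2)).aestronglyMeasurable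
    · simp only [Pi.add_apply, Real.norm_eq_abs, gs_sq]
      rw [abs_of_nonneg (by positivity)]
      have hexp := Real.exp_pos (-((t-ξ)^2))
      nlinarith [sq_nonneg ((t - ξ) - ξ), sq_nonneg (t - 2*ξ), Real.exp_pos (-((t-ξ)^2))]

lemma integral_exp_shift_sq (ξ : ℝ) :
    ∫ t : ℝ, Real.exp (-((t - ξ)^2)) = Real.sqrt π := by
  have h0 : (fun t : ℝ => Real.exp (-((t - ξ)^2)))
      = fun t => (fun x : ℝ => Real.exp (-1 * x^2)) (t - ξ) := by
    funext t; norm_num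
  rw [h0, integral_sub_right_eq_self (fun x : ℝ => Real.exp (-1 * x^2)) ξ,
    integral_gaussian 1]
  norm_num

lemma nR_gs (ξ : ℝ) : nR (gs ξ) = Real.sqrt π := by
  unfold nR
  rw [show (fun t => (gs ξ t)^2) = fun t => Real.exp (-((t - ξ)^2)) from
    funext fun t => gs_sq ξ t]
  exact integral_exp_shift_sq ξ

lemma integral_two_sq_exp : ∫ x : ℝ, 2 * (x^2 * Real.exp (-(x^2))) = Real.sqrt π := by
  have hwD : ∀ x : ℝ, HasDerivAt (fun x : ℝ => x * Real.exp (-(x^2)))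
      (Real.exp (-(x^2)) - 2 * (x^2 * Real.exp (-(x^2)))) x := by
    intro x
    have h1 : HasDerivAt (fun x : ℝ => -(x^2)) (-(2*x)) x := by
      have := (hasDerivAt_pow 2 x).neg
      exact this.congr_deriv (by norm_num)
    have h2 := h1.exp
    have := (hasDerivAt_id x).mul h2
    exact this.congr_deriv (by simp only [id_eq]; ring)
  have hexp0 : Integrable (fun x : ℝ => Real.exp (-(x^2))) :=
    (int_exp_shift_sq 0).congr (ae_of_all _ fun t => by norm_num)
  have hw_int : Integrable (fun x : ℝ => x * Real.exp (-(x^2))) := by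
    refine Integrable.mono' (int_sq_exp_sq.add hexp0) ?_ (ae_of_all _ fun x => ?_)
    · exact (continuous_id.mul (continuous_exp.comp (continuous_pow 2).neg)).aestronglyMeasurable
    · simp only [Pi.add_apply, Real.norm_eq_abs, abs_mul,
        abs_of_nonneg (Real.exp_pos (-(x^2))).le]
      nlinarith [abs_le_sq_add_one x, Real.exp_pos (-(x^2)), abs_nonneg x, sq_abs x]
  have hwdiff : Differentiable ℝ (fun x : ℝ => x * Real.exp (-(x^2))) :=
    fun x => (hwD x).differentiableAt
  have hderiv : deriv (fun x : ℝ => x * Real.exp (-(x^2)))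
      = fun x => Real.exp (-(x^2)) - 2 * (x^2 * Real.exp (-(x^2))) :=
    funext fun x => (hwD x).deriv
  have hw'_int : Integrable (deriv (fun x : ℝ => x * Real.exp (-(x^2)))) := by
    rw [hderiv]
    exact hexp0.sub (int_sq_exp_sq.const_mul 2)
  have h0 := integral_deriv_eq_zero hwdiff hw_int hw'_int
  rw [hderiv] at h0
  rw [integral_sub hexp0 (int_sq_exp_sq.const_mul 2)] at h0
  have hgauss : ∫ x : ℝ, Real.exp (-(x^2)) = Real.sqrt π := by
    rw [show (fun x : ℝ => Real.exp (-(x^2))) = fun x : ℝ => Real.exp (-((x - 0)^2)) by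
      funext x; norm_num]
    exact integral_exp_shift_sq 0
  rw [hgauss] at h0
  linarith

/-- total energy of the Gaussian equals its norm. -/
lemma A_gs (ξ : ℝ) :
    ∫ t, ((deriv (gs ξ) t)^2 + (t - ξ)^2 * (gs ξ t)^2) = Real.sqrt π := by
  have h0 : (fun t => (deriv (gs ξ) t)^2 + (t - ξ)^2 * (gs ξ t)^2)
      = fun t => (fun x => 2 * (x^2 * Real.exp (-(x^2)))) (t - ξ) := by
    funext t
    rw [gs_deriv ξ]
    simp only []
    rw [mul_pow, gs_sq]
    ring
  rw [h0, integral_sub_right_eq_self (fun x : ℝ => 2 * (x^2 * Real.exp (-(x^2)))) ξ]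
  exact integral_two_sq_exp

/-- tail bound for the Gaussian mass on the negative half line. -/
lemma Nm_gs_le {ξ : ℝ} (hξ : 1 ≤ ξ) :
    ∫ t in Iio (0:ℝ), (gs ξ t)^2 ≤ Real.sqrt π / ξ := by
  have hξ0 : (0:ℝ) < ξ := lt_of_lt_of_le one_pos hξ
  have hmono : ∫ t in Iio (0:ℝ), (gs ξ t)^2
      ≤ ∫ t in Iio (0:ℝ), Real.exp (-(ξ^2)) * Real.exp (-(t^2)) := by
    refine setIntegral_mono_on ?_ ?_ measurableSet_Iio fun t ht => ?_
    · exact ((memB1_gs ξ).2.1).integrableOn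
    · exact (((int_exp_shift_sq 0).congr (ae_of_all _ fun t => by norm_num)).const_mul
        (Real.exp (-(ξ^2)))).integrableOn
    · rw [gs_sq, ← Real.exp_add]
      apply Real.exp_le_exp.2
      have ht' : t < 0 := ht
      nlinarith
  have hexp0 : Integrable (fun x : ℝ => Real.exp (-(x^2))) :=
    (int_exp_shift_sq 0).congr (ae_of_all _ fun t => by norm_num)
  have h2 : ∫ t in Iio (0:ℝ), Real.exp (-(ξ^2)) * Real.exp (-(t^2))
      = Real.exp (-(ξ^2)) * ∫ t in Iio (0:ℝ), Real.exp (-(t^2)) := by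
    rw [MeasureTheory.integral_const_mul]
  have h3 : ∫ t in Iio (0:ℝ), Real.exp (-(t^2)) ≤ Real.sqrt π := by
    have := setIntegral_le_integral (s := Iio (0:ℝ)) hexp0
      (ae_of_all _ fun t => (Real.exp_pos _).le)
    calc ∫ t in Iio (0:ℝ), Real.exp (-(t^2)) ≤ ∫ t, Real.exp (-(t^2)) := this
      _ = Real.sqrt π := by
          rw [show (fun x : ℝ => Real.exp (-(x^2))) = fun x : ℝ => Real.exp (-((x - 0)^2)) by
            funext x; norm_num]
          exact integral_exp_shift_sq 0
  have h4 : Real.exp (-(ξ^2)) ≤ 1/ξ := by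
    rw [Real.exp_neg, one_div]
    apply inv_anti₀ hξ0
    nlinarith [Real.add_one_le_exp (ξ^2)]
  calc ∫ t in Iio (0:ℝ), (gs ξ t)^2
      ≤ Real.exp (-(ξ^2)) * ∫ t in Iio (0:ℝ), Real.exp (-(t^2)) := by rw [← h2]; exact hmono
    _ ≤ (1/ξ) * Real.sqrt π := by
        apply mul_le_mul h4 h3 (setIntegral_nonneg measurableSet_Iio
          fun t _ => (Real.exp_pos _).le) (by positivity)
    _ = Real.sqrt π / ξ := by ring

end Gaussian

section Machinery

lemma nR_pos {u : ℝ → ℝ} (h : nR u ≠ 0) : 0 < nR u :=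
  lt_of_le_of_ne (nR_nonneg u) (Ne.symm h)

lemma MemB1.memB1p {u : ℝ → ℝ} (hu : MemB1 u) : MemB1p u :=
  ⟨hu.1, hu.2.1.integrableOn, hu.2.2.1.integrableOn, hu.2.2.2.integrableOn⟩

variable {a m α ξ : ℝ}

lemma QI_ge_neg_alpha (hm : 1 ≤ m) (ha : 0 ≤ a) (hα : 0 ≤ α) {u : ℝ → ℝ} (hu : MemB1 u) :
    -α * nR u ≤ QI a m α ξ u := by
  rw [QI_split hu a m α ξ, nR_split hu]
  have h1 := Np_nonneg u; have h2 := Nm_nonneg u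
  have h3 := Pp_nonneg u ξ; have h4 := Pm_nonneg u ξ
  have hm0 : (0:ℝ) < m := lt_of_lt_of_le one_pos hm
  have hminv : (0:ℝ) ≤ 1/m := by positivity
  nlinarith [mul_nonneg hminv h4, mul_nonneg (mul_nonneg ha hα) h2, mul_nonneg hα h2]

lemma nR_gs_ne (ξ : ℝ) : nR (gs ξ) ≠ 0 := by
  rw [nR_gs]
  exact (Real.sqrt_pos.2 Real.pi_pos).ne'

lemma mu1_set_nonempty :
    {r : ℝ | ∃ u : ℝ → ℝ, MemB1 u ∧ nR u ≠ 0 ∧ r = QI a m α ξ u / nR u}.Nonempty :=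
  ⟨_, gs 0, memB1_gs 0, nR_gs_ne 0, rfl⟩

lemma mu1_set_bddBelow (hm : 1 ≤ m) (ha : 0 ≤ a) (hα : 0 ≤ α) :
    BddBelow {r : ℝ | ∃ u : ℝ → ℝ, MemB1 u ∧ nR u ≠ 0 ∧ r = QI a m α ξ u / nR u} := by
  refine ⟨-α, ?_⟩
  rintro r ⟨u, hu, hn, rfl⟩
  rw [le_div_iff₀ (nR_pos hn)]
  exact QI_ge_neg_alpha hm ha hα hu

lemma le_mu1 {c : ℝ} (h : ∀ u : ℝ → ℝ, MemB1 u → nR u ≠ 0 → c * nR u ≤ QI a m α ξ u) :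
    c ≤ mu1 a m α ξ := by
  refine le_csInf mu1_set_nonempty ?_
  rintro r ⟨u, hu, hn, rfl⟩
  rw [le_div_iff₀ (nR_pos hn)]
  exact h u hu hn

lemma mu1_le (hm : 1 ≤ m) (ha : 0 ≤ a) (hα : 0 ≤ α) {u : ℝ → ℝ}
    (hu : MemB1 u) (hn : nR u ≠ 0) : mu1 a m α ξ ≤ QI a m α ξ u / nR u :=
  csInf_le (mu1_set_bddBelow hm ha hα) ⟨u, hu, hn, rfl⟩

lemma neg_alpha_le_mu1 (hm : 1 ≤ m) (ha : 0 ≤ a) (hα : 0 ≤ α) :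
    -α ≤ mu1 a m α ξ :=
  le_mu1 fun u hu _ => QI_ge_neg_alpha hm ha hα hu

lemma le_infRange {c : ℝ} (h : ∀ ξ, c ≤ mu1 a m α ξ) :
    c ≤ sInf (Set.range (mu1 a m α)) :=
  le_csInf (range_nonempty _) (by rintro r ⟨ξ, rfl⟩; exact h ξ)

lemma infRange_le (hm : 1 ≤ m) (ha : 0 ≤ a) (hα : 0 ≤ α) (ξ : ℝ) :
    sInf (Set.range (mu1 a m α)) ≤ mu1 a m α ξ :=
  csInf_le ⟨-α, by rintro r ⟨ξ', rfl⟩; exact neg_alpha_le_mu1 hm ha hα⟩ ⟨ξ, rfl⟩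

/-- lower bound `1/m - α ≤ μ₁`. -/
lemma mu1_lb0 (hm : 1 ≤ m) (ha : 0 ≤ a) (hα : 0 ≤ α) (ξ : ℝ) :
    1/m - α ≤ mu1 a m α ξ := by
  refine le_mu1 fun u hu hn => ?_
  have hosc : nR u ≤ (∫ t in Iio (0:ℝ), ((deriv u t)^2 + (t - ξ)^2 * (u t)^2))
      + ∫ t in Ioi (0:ℝ), ((deriv u t)^2 + (t - ξ)^2 * (u t)^2) := by
    rw [← A_split hu ξ]; exact osc_line hu ξ
  rw [QI_split hu a m α ξ, nR_split hu]
  rw [nR_split hu] at hosc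
  have h1 := Np_nonneg u; have h2 := Nm_nonneg u
  have h3 := Pp_nonneg u ξ; have h4 := Pm_nonneg u ξ
  have hm0 : (0:ℝ) < m := lt_of_lt_of_le one_pos hm
  have hminv1 : 1/m ≤ 1 := by rw [div_le_one hm0]; exact hm
  have hminv0 : (0:ℝ) ≤ 1/m := by positivity
  nlinarith [mul_nonneg (sub_nonneg.2 hminv1) h3, mul_nonneg (mul_nonneg ha hα) h2,
    mul_nonneg hα h2, mul_nonneg hminv0 (sub_nonneg.2 hosc)]

/-- lower bound `min (Θ₀ - α) (aα) ≤ μ₁`. -/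
lemma mu1_lb1 (hm : 1 ≤ m) (ha : 0 ≤ a) (hα : 0 ≤ α) (ξ : ℝ) :
    min (Theta0 - α) (a*α) ≤ mu1 a m α ξ := by
  refine le_mu1 fun u hu hn => ?_
  have hIoi := theta0_bound_Ioi hu.memB1p ξ
  rw [QI_split hu a m α ξ, nR_split hu]
  have h1 := Np_nonneg u; have h2 := Nm_nonneg u
  have h4 := Pm_nonneg u ξ
  have hm0 : (0:ℝ) < m := lt_of_lt_of_le one_pos hm
  have hminv0 : (0:ℝ) ≤ 1/m := by positivity
  have hmin1 : min (Theta0 - α) (a*α) ≤ Theta0 - α := min_le_left _ _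
  have hmin2 : min (Theta0 - α) (a*α) ≤ a*α := min_le_right _ _
  nlinarith [mul_nonneg hminv0 h4, mul_le_mul_of_nonneg_right hmin1 h1,
    mul_le_mul_of_nonneg_right hmin2 h2]

/-- main lower bound. -/
lemma mu1_lb2 {ε : ℝ} (hε : ε ∈ Ioo (0:ℝ) 1) (hm : m = 1 + ε) (ha : 0 ≤ a)
    (hθα : Theta0 ≤ α) (hα : 0 ≤ α) (ξ : ℝ) :
    (1 - α + m*ε*(Theta0 - α))/(1 + m*ε) ≤ mu1 a m α ξ := by
  obtain ⟨hε0, hε1⟩ := hε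
  have hm1 : 1 ≤ m := by rw [hm]; linarith
  have hm0 : (0:ℝ) < m := lt_of_lt_of_le one_pos hm1
  have hs0 : 0 < 1 + m*ε := by positivity
  refine le_mu1 fun u hu hn => ?_
  rw [div_mul_eq_mul_div, div_le_iff₀ hs0]
  have hosc : nR u ≤ (∫ t in Iio (0:ℝ), ((deriv u t)^2 + (t - ξ)^2 * (u t)^2))
      + ∫ t in Ioi (0:ℝ), ((deriv u t)^2 + (t - ξ)^2 * (u t)^2) := by
    rw [← A_split hu ξ]; exact osc_line hu ξ
  have hIoi := theta0_bound_Ioi hu.memB1p ξ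
  rw [QI_split hu a m α ξ]
  rw [nR_split hu] at hosc ⊢
  have h1 := Np_nonneg u; have h2 := Nm_nonneg u
  have h3 := Pp_nonneg u ξ; have h4 := Pm_nonneg u ξ
  -- abbreviations
  set Pp := ∫ t in Ioi (0:ℝ), ((deriv u t)^2 + (t - ξ)^2 * (u t)^2) with hPp
  set Pm := ∫ t in Iio (0:ℝ), ((deriv u t)^2 + (t - ξ)^2 * (u t)^2) with hPm
  set Np := ∫ t in Ioi (0:ℝ), (u t)^2 with hNp
  set Nm := ∫ t in Iio (0:ℝ), (u t)^2 with hNm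
  have key1 : m*ε*(Pp - α*Np) ≥ m*ε*(Theta0 - α)*Np := by nlinarith [mul_nonneg (mul_nonneg hm0.le hε0.le) (sub_nonneg.2 hIoi)]
  have key2 : (1 + m*ε) * ((1/m) * Pm) ≥ Pm := by
    rw [hm]
    have hfac : (1 + (1+ε)*ε) / (1+ε) ≥ 1 := by
      rw [ge_iff_le, le_div_iff₀ (by linarith : (0:ℝ) < 1+ε)]
      nlinarith
    calc (1 + (1+ε)*ε) * ((1/(1+ε)) * Pm) = ((1 + (1+ε)*ε)/(1+ε)) * Pm := by ring
      _ ≥ 1 * Pm := mul_le_mul_of_nonneg_right hfac h4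
      _ = Pm := one_mul Pm
  have key3 : 0 ≤ (1 + m*ε) * (a*α*Nm) := by positivity
  have key4 : 0 ≤ (α - m*ε*(Theta0 - α)) * Nm := by
    have : 0 ≤ α - m*ε*(Theta0 - α) := by nlinarith [mul_nonneg (mul_nonneg hm0.le hε0.le) (sub_nonneg.2 hθα)]
    exact mul_nonneg this h2
  nlinarith [hosc]

end Machinery

section Quant

variable {a m α : ℝ}

open Real

/-- Gaussian trial-function upper bound for `QI`. -/
lemma QI_gs_le (hm : 1 ≤ m) (ha : 0 ≤ a) (hα : 0 ≤ α) {ξ : ℝ} (hξ : 1 ≤ ξ) :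
    QI a m α ξ (gs ξ) ≤ Real.sqrt π - α * (Real.sqrt π - (1+a) * (Real.sqrt π / ξ)) := by
  have hu := memB1_gs ξ
  rw [QI_split hu a m α ξ]
  have hA : (∫ t in Iio (0:ℝ), ((deriv (gs ξ) t)^2 + (t - ξ)^2 * (gs ξ t)^2))
      + ∫ t in Ioi (0:ℝ), ((deriv (gs ξ) t)^2 + (t - ξ)^2 * (gs ξ t)^2) = Real.sqrt π := by
    rw [← A_split hu ξ]; exact A_gs ξ
  have hN : (∫ t in Iio (0:ℝ), (gs ξ t)^2) + ∫ t in Ioi (0:ℝ), (gs ξ t)^2 = Real.sqrt π := by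
    rw [← nR_split hu]; exact nR_gs ξ
  have hNm := Nm_gs_le hξ
  have h2 := Nm_nonneg (gs ξ)
  have h3 := Pp_nonneg (gs ξ) ξ
  have h4 := Pm_nonneg (gs ξ) ξ
  have hm0 : (0:ℝ) < m := lt_of_lt_of_le one_pos hm
  have hminv1 : 1/m ≤ 1 := by rw [div_le_one hm0]; exact hm
  have hminv0 : (0:ℝ) ≤ 1/m := by positivity
  nlinarith [mul_nonneg (sub_nonneg.2 hminv1) h4, mul_le_mul_of_nonneg_left hNm hα,
    mul_le_mul_of_nonneg_left hNm (mul_nonneg ha hα)]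

/-- `Θ₀ ≤ α` at criticality. -/
lemma theta0_le_alpha (hm : 1 ≤ m) (ha : 0 < a) (hα : 0 < α)
    (hinf : sInf (Set.range (mu1 a m α)) = 0) : Theta0 ≤ α := by
  have h := le_infRange (a := a) (m := m) (α := α) (mu1_lb1 hm ha.le hα.le)
  rw [hinf] at h
  by_contra hc
  push_neg at hc
  have h1 : 0 < Theta0 - α := by linarith
  have h2 : 0 < a * α := mul_pos ha hα
  have := lt_min h1 h2
  linarith

/-- main quantitative inequality at criticality. -/
lemma main_quant {ε : ℝ} (hε : ε ∈ Ioo (0:ℝ) 1) (hm : m = 1 + ε) (ha : 0 < a) (hα : 0 < α)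
    (hinf : sInf (Set.range (mu1 a m α)) = 0) :
    0 ≥ 1 - α + m * ε * (Theta0 - α) := by
  have hm1 : 1 ≤ m := by rw [hm]; linarith [hε.1]
  have hθα := theta0_le_alpha hm1 ha hα hinf
  have h := le_infRange (a := a) (m := m) (α := α) (mu1_lb2 hε hm ha.le hθα hα.le)
  rw [hinf] at h
  have hs0 : (0:ℝ) < 1 + m*ε := by
    have : (0:ℝ) < m := lt_of_lt_of_le one_pos hm1
    nlinarith [hε.1]
  nlinarith [mul_nonneg (neg_nonneg.2 h) hs0.le, div_mul_cancel₀
    (1 - α + m*ε*(Theta0 - α)) hs0.ne']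

/-- at criticality `α ≤ 1 + δ` for every `δ > 0`. -/
lemma alpha_le_one_add (hm : 1 ≤ m) (ha : 0 < a) (hα : 0 < α)
    (hinf : sInf (Set.range (mu1 a m α)) = 0) {δ : ℝ} (hδ : 0 < δ) : α ≤ 1 + δ := by
  set ξ : ℝ := (1+a) * ((1+δ)/δ) with hξ_def
  have hξ : 1 ≤ ξ := by
    rw [hξ_def]
    have h1 : (1:ℝ) ≤ 1 + a := by linarith
    have h2 : (1:ℝ) ≤ (1+δ)/δ := by rw [le_div_iff₀ hδ]; linarith
    nlinarith
  have hξ0 : 0 < ξ := lt_of_lt_of_le one_pos hξ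
  -- 0 ≤ μ₁ at ξ
  have h0 : 0 ≤ mu1 a m α ξ := by
    rw [← hinf]; exact infRange_le hm ha.le hα.le ξ
  have h1 : mu1 a m α ξ ≤ QI a m α ξ (gs ξ) / nR (gs ξ) :=
    mu1_le hm ha.le hα.le (memB1_gs ξ) (nR_gs_ne ξ)
  have h2 : 0 ≤ QI a m α ξ (gs ξ) := by
    have hp : 0 < nR (gs ξ) := nR_pos (nR_gs_ne ξ)
    have h := mul_le_mul_of_nonneg_right (le_trans h0 h1) hp.le
    rwa [zero_mul, div_mul_cancel₀ _ hp.ne'] at h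
  have h3 := QI_gs_le (α := α) hm ha.le hα.le hξ
  have hsp : 0 < Real.sqrt π := Real.sqrt_pos.2 Real.pi_pos
  -- (1+a)/ξ = δ/(1+δ)
  have h4 : (1+a) * (Real.sqrt π / ξ) = Real.sqrt π * (δ/(1+δ)) := by
    have ha1 : (1+a) ≠ 0 := by positivity
    have hδ' : δ ≠ 0 := hδ.ne'
    have hδ1 : (1+δ) ≠ 0 := by positivity
    rw [hξ_def]
    field_simp
  have h5 : α * (Real.sqrt π - Real.sqrt π * (δ/(1+δ))) ≤ Real.sqrt π := by
    rw [← h4]; linarith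
  have h6 : Real.sqrt π - Real.sqrt π * (δ/(1+δ)) = Real.sqrt π / (1+δ) := by
    field_simp
    ring
  rw [h6] at h5
  rw [div_eq_mul_inv] at h5
  have h7 : α * Real.sqrt π ≤ Real.sqrt π * (1+δ) := by
    have hd0 : (0:ℝ) < 1 + δ := by linarith
    calc α * Real.sqrt π = (α * (Real.sqrt π * (1+δ)⁻¹)) * (1+δ) := by field_simp
      _ ≤ Real.sqrt π * (1+δ) := by nlinarith
  nlinarith

end Quant

section Lip

variable {a m α β : ℝ}

lemma QI_diff_bound {u : ℝ → ℝ} (hu : MemB1 u) (ha : 0 ≤ a) (ξ : ℝ) :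
    QI a m α ξ u ≤ QI a m β ξ u + ((1+a) * |α - β|) * nR u := by
  rw [QI_split hu a m α ξ, QI_split hu a m β ξ, nR_split hu]
  have h1 := Np_nonneg u; have h2 := Nm_nonneg u
  have habs1 : α - β ≤ |α - β| := le_abs_self _
  have habs2 : -(|α - β|) ≤ α - β := neg_abs_le _
  nlinarith [mul_le_mul_of_nonneg_right habs1 h1, mul_le_mul_of_nonneg_right habs2 h1,
    mul_le_mul_of_nonneg_right habs1 h2, mul_le_mul_of_nonneg_right habs2 h2,
    mul_nonneg (mul_nonneg ha (abs_nonneg (α-β))) h1,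
    mul_le_mul_of_nonneg_left (mul_le_mul_of_nonneg_right habs1 h2) ha,
    mul_le_mul_of_nonneg_left (mul_le_mul_of_nonneg_right habs2 h2) ha]

lemma mu1_lip (hm : 1 ≤ m) (ha : 0 ≤ a) (hα : 0 ≤ α) (hβ : 0 ≤ β) (ξ : ℝ) :
    mu1 a m α ξ ≤ mu1 a m β ξ + (1+a) * |α - β| := by
  have h : mu1 a m α ξ - (1+a) * |α - β| ≤ mu1 a m β ξ := by
    refine le_csInf mu1_set_nonempty ?_
    rintro r ⟨u, hu, hn, rfl⟩
    have hp := nR_pos hn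
    have hd : QI a m α ξ u / nR u ≤ QI a m β ξ u / nR u + (1+a) * |α - β| := by
      rw [div_add' _ _ _ hp.ne', div_le_div_iff₀ hp hp]
      nlinarith [QI_diff_bound (m := m) (α := α) (β := β) hu ha ξ]
    have hμ : mu1 a m α ξ ≤ QI a m α ξ u / nR u := mu1_le hm ha hα hu hn
    linarith
  linarith

lemma f_lip (hm : 1 ≤ m) (ha : 0 ≤ a) (hα : 0 ≤ α) (hβ : 0 ≤ β) :
    sInf (Set.range (mu1 a m α)) ≤ sInf (Set.range (mu1 a m β)) + (1+a) * |α - β| := by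
  have h : sInf (Set.range (mu1 a m α)) - (1+a) * |α - β| ≤ sInf (Set.range (mu1 a m β)) := by
    refine le_csInf (range_nonempty _) ?_
    rintro r ⟨ξ, rfl⟩
    have h1 : sInf (Set.range (mu1 a m α)) ≤ mu1 a m α ξ := infRange_le hm ha hα ξ
    have h2 := mu1_lip (α := α) (β := β) hm ha hα hβ ξ
    linarith
  linarith

lemma f_contOn (hm : 1 ≤ m) (ha : 0 ≤ a) :
    ContinuousOn (fun α => sInf (Set.range (mu1 a m α))) (Ici (0:ℝ)) := by
  have hK : (0:ℝ) ≤ 1 + a := by linarith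
  refine LipschitzOnWith.continuousOn (K := Real.toNNReal (1+a))
    (LipschitzOnWith.of_dist_le_mul fun x hx y hy => ?_)
  rw [Real.dist_eq, Real.dist_eq, Real.coe_toNNReal _ hK]
  have h1 := f_lip (m := m) hm ha (mem_Ici.1 hx) (mem_Ici.1 hy)
  have h2 := f_lip (m := m) hm ha (mem_Ici.1 hy) (mem_Ici.1 hx)
  rw [abs_sub_comm y x] at h2
  rw [abs_le]
  constructor <;> linarith

open Real in
lemma exists_crit {a m : ℝ} (ha : 0 < a) (hm : 1 < m) (hm2 : m < 2) :
    ∃ α : ℝ, 0 < α ∧ α ≤ 3 ∧ sInf (Set.range (mu1 a m α)) = 0 := by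
  set f : ℝ → ℝ := fun α => sInf (Set.range (mu1 a m α)) with hf
  have hm0 : (0:ℝ) < m := by linarith
  have hlo_pos : 0 < 1/(2*m) := by positivity
  have hlo_le : 1/(2*m) ≤ 3 := by
    rw [div_le_iff₀ (by positivity)]
    nlinarith
  have hflo : 0 < f (1/(2*m)) := by
    have h := le_infRange (a := a) (m := m) (α := 1/(2*m)) (mu1_lb0 hm.le ha.le hlo_pos.le)
    have : 1/m - 1/(2*m) = 1/(2*m) := by field_simp; ring
    rw [this] at h
    exact lt_of_lt_of_le hlo_pos h
  have hfhi : f 3 < 0 := by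
    set ξ : ℝ := 2*(1+a) with hξ_def
    have hξ : 1 ≤ ξ := by rw [hξ_def]; linarith
    have hsp : 0 < Real.sqrt π := Real.sqrt_pos.2 Real.pi_pos
    have hQ : QI a m 3 ξ (gs ξ) < 0 := by
      have h3 := QI_gs_le (a := a) (m := m) (α := 3) hm.le ha.le (by norm_num) hξ
      have h4 : (1+a) * (Real.sqrt π / ξ) = Real.sqrt π / 2 := by
        rw [hξ_def]
        have : (1+a) ≠ 0 := by positivity
        field_simp
      rw [h4] at h3
      nlinarith
    have h5 : mu1 a m 3 ξ ≤ QI a m 3 ξ (gs ξ) / nR (gs ξ) :=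
      mu1_le hm.le ha.le (by norm_num) (memB1_gs ξ) (nR_gs_ne ξ)
    have h6 : QI a m 3 ξ (gs ξ) / nR (gs ξ) < 0 :=
      div_neg_of_neg_of_pos hQ (nR_pos (nR_gs_ne ξ))
    have h7 : f 3 ≤ mu1 a m 3 ξ := infRange_le hm.le ha.le (by norm_num) ξ
    linarith
  have hcont : ContinuousOn f (Icc (1/(2*m)) 3) :=
    (f_contOn hm.le ha.le).mono fun x hx => le_trans hlo_pos.le hx.1
  have hIVT := intermediate_value_Icc' hlo_le hcont
  have h0mem : (0:ℝ) ∈ Icc (f 3) (f (1/(2*m))) := ⟨hfhi.le, hflo.le⟩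
  obtain ⟨α, hαmem, hα0⟩ := hIVT h0mem
  exact ⟨α, lt_of_lt_of_le hlo_pos hαmem.1, hαmem.2, hα0⟩

end Lip

lemma quant_all {a ε m α : ℝ} (ha : 0 < a) (hε : ε ∈ Ioo (0:ℝ) 1) (hm : m = 1 + ε)
    (hα : 0 < α) (hinf : sInf (Set.range (mu1 a m α)) = 0) :
    0 ≥ 1 - α + m * ε * (Theta0 - α) ∧
    1 - α ≤ m * ε * (α - Theta0) ∧ m * ε * (α - Theta0) ≤ 2 * ε := by
  obtain ⟨hε0, hε1⟩ := hε
  have hm1 : 1 ≤ m := by rw [hm]; linarith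
  have hm0 : (0:ℝ) < m := lt_of_lt_of_le one_pos hm1
  have hm2 : m < 2 := by rw [hm]; linarith
  have p1 := main_quant ⟨hε0, hε1⟩ hm ha hα hinf
  have hδpos : 0 < 2/m - 1 := by
    rw [sub_pos, lt_div_iff₀ hm0]
    linarith
  have hα2 : α ≤ 2/m := by
    have := alpha_le_one_add hm1 ha hα hinf hδpos
    linarith
  have hmα2 : m * α ≤ 2 := by
    have := mul_le_mul_of_nonneg_left hα2 hm0.le
    rwa [mul_div_cancel₀ 2 hm0.ne'] at this
  have hθ0 := theta0_nonneg
  refine ⟨p1, by nlinarith, ?_⟩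
  nlinarith [mul_nonneg hε0.le (sub_nonneg.2 hmα2),
    mul_nonneg hε0.le (mul_nonneg hm0.le hθ0)]

/-- `α(a,m) → 1` as `m → 1⁺`; quantitatively, if `m = 1 + ε` with
`ε ∈ (0,1)` and `α = α(a,m)`, then `0 ≥ 1 - α + mε(Θ₀ - α)`, hence
`1 - α ≤ mε(α - Θ₀) ≤ 2ε`. -/
theorem alpha_limit_m_to_one (a : ℝ) (ha : 0 < a) :
    Tendsto (fun m => alphaF a m) (𝓝[>] (1:ℝ)) (𝓝 1) ∧
    ∀ ε m α : ℝ, ε ∈ Ioo (0:ℝ) 1 → m = 1 + ε → 0 < α →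
      sInf (Set.range (mu1 a m α)) = 0 →
      0 ≥ 1 - α + m * ε * (Theta0 - α) ∧
      1 - α ≤ m * ε * (α - Theta0) ∧ m * ε * (α - Theta0) ≤ 2 * ε := by
  constructor
  · rw [Metric.tendsto_nhdsWithin_nhds]
    intro δ hδ
    refine ⟨min (δ/4) (1/2), by positivity, ?_⟩
    intro m hmS hmd
    have hm1 : 1 < m := hmS
    rw [Real.dist_eq] at hmd ⊢
    have hε0 : 0 < m - 1 := by linarith
    have hεlt : m - 1 < min (δ/4) (1/2) := by rwa [abs_of_pos hε0] at hmd
    have hε4 : m - 1 < δ/4 := lt_of_lt_of_le hεlt (min_le_left _ _)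
    have hεhalf : m - 1 < 1/2 := lt_of_lt_of_le hεlt (min_le_right _ _)
    have hm2 : m < 2 := by linarith
    have hmeq : m = 1 + (m - 1) := by ring
    have hεIoo : (m - 1) ∈ Ioo (0:ℝ) 1 := ⟨hε0, by linarith⟩
    obtain ⟨α₀, hα₀pos, _, hα₀⟩ := exists_crit ha hm1 hm2
    have hA_ne : {α : ℝ | 0 < α ∧ sInf (Set.range (mu1 a m α)) = 0}.Nonempty :=
      ⟨α₀, hα₀pos, hα₀⟩
    have hbdd : BddBelow {α : ℝ | 0 < α ∧ sInf (Set.range (mu1 a m α)) = 0} :=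
      ⟨0, fun α hα => hα.1.le⟩
    have hlb : ∀ α ∈ {α : ℝ | 0 < α ∧ sInf (Set.range (mu1 a m α)) = 0},
        1 - 2*(m-1) ≤ α := by
      rintro α ⟨hαp, hinf⟩
      obtain ⟨_, p2, p3⟩ := quant_all ha hεIoo hmeq hαp hinf
      linarith
    have hub : α₀ ≤ 1 + δ/2 :=
      alpha_le_one_add hm1.le ha hα₀pos hα₀ (by positivity)
    have h1 : 1 - 2*(m-1) ≤ alphaF a m := le_csInf hA_ne hlb
    have h2 : alphaF a m ≤ α₀ := csInf_le hbdd ⟨hα₀pos, hα₀⟩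
    rw [abs_lt]
    constructor <;> [nlinarith; nlinarith]
  · intro ε m α hε hm hα hinf
    exact quant_all ha hε hm hα hinf
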